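/- Let A and Ã be self-adjoint operators on an n-dimensional complex inner product space with eigenvalues λ₁ ≥ ⋯ ≥ λₙ and λ̃₁ ≥ ⋯ ≥ λ̃ₙ respectively. Then for any 1-Lipschitz function f: ℝ → ℝ, |tr f(A) − tr f(Ã)| ≤ ‖Ã − A‖₁, where ‖·‖₁ denotes the trace norm (sum of singular values). -/

import Mathlib

open Matrix Finset ComplexConjugate ComplexOrder

namespace Stmt4Aux

variable {n : ℕ}

local notation "E" => EuclideanSpace ℂ (Fin n)

lemma toEuclideanLin_eigBasis {M : Matrix (Fin n) (Fin n) ℂ} (hM : M.IsHermitian) (j : Fin n) :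
    Matrix.toEuclideanLin M (hM.eigenvectorBasis j) = (hM.eigenvalues j : ℂ) • hM.eigenvectorBasis j := by
  apply (WithLp.equiv 2 (Fin n → ℂ)).injective
  rw [Matrix.toEuclideanLin_apply]
  have h := hM.mulVec_eigenvectorBasis j
  funext k
  have h2 := congrFun h k
  simp only [Pi.smul_apply] at h2
  show (M *ᵥ _) k = ((hM.eigenvalues j : ℂ) • hM.eigenvectorBasis j) k
  rw [h2]
  simp [Complex.real_smul]

lemma qform_eq {M : Matrix (Fin n) (Fin n) ℂ} (hM : M.IsHermitian)
    (x : EuclideanSpace ℂ (Fin n)) :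
    Complex.re (inner ℂ x (Matrix.toEuclideanLin M x) : ℂ) =
      ∑ j, hM.eigenvalues j * ‖hM.eigenvectorBasis.repr x j‖ ^ 2 := by
  set b := hM.eigenvectorBasis
  have hsym : (Matrix.toEuclideanLin M).IsSymmetric :=
    (Matrix.isHermitian_iff_isSymmetric).mp hM
  have hrep : ∀ j, b.repr (Matrix.toEuclideanLin M x) j
      = (hM.eigenvalues j : ℂ) * b.repr x j := by
    intro j
    rw [b.repr_apply_apply, b.repr_apply_apply, ← hsym (b j) x,
      toEuclideanLin_eigBasis hM j, inner_smul_left]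
    simp
    exact Or.inl rfl
  have hinner : (inner ℂ x (Matrix.toEuclideanLin M x) : ℂ)
      = ∑ j, conj (b.repr x j) * ((hM.eigenvalues j : ℂ) * b.repr x j) := by
    rw [← b.repr.inner_map_map x (Matrix.toEuclideanLin M x)]
    rw [PiLp.inner_apply]
    exact Finset.sum_congr rfl fun j _ => by rw [hrep j, RCLike.inner_apply']
  rw [hinner]
  rw [Complex.re_sum]
  refine Finset.sum_congr rfl fun j _ => ?_
  have : conj (b.repr x j) * ((hM.eigenvalues j : ℂ) * b.repr x j)
      = (hM.eigenvalues j : ℂ) * (conj (b.repr x j) * b.repr x j) := by ring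
  rw [this, RCLike.conj_mul]
  norm_cast
  simp [Complex.mul_re]
  exact Or.inl (by rw [← Complex.ofReal_pow, Complex.ofReal_re])

lemma sum_repr_sq (b : OrthonormalBasis (Fin n) ℂ E) (x : E) :
    ∑ j, ‖b.repr x j‖ ^ 2 = ‖x‖ ^ 2 := by
  rw [← b.repr.norm_map x, EuclideanSpace.norm_eq, Real.sq_sqrt (by positivity)]

lemma repr_eq_zero_of_mem_span {b : OrthonormalBasis (Fin n) ℂ E} {s : Finset (Fin n)} {x : E}
    (hx : x ∈ Submodule.span ℂ (Set.range fun j : {j // j ∈ s} => b j))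
    {k : Fin n} (hk : k ∉ s) : b.repr x k = 0 := by
  rw [b.repr_apply_apply]
  induction hx using Submodule.span_induction with
  | mem y hy =>
      obtain ⟨j, rfl⟩ := hy
      exact b.orthonormal.2 (fun h : k = (j : Fin n) => hk (h ▸ j.2))
  | zero => exact inner_zero_right _
  | add y z _ _ hy hz => rw [inner_add_right, hy, hz, add_zero]
  | smul c y _ hy => rw [inner_smul_right, hy, mul_zero]

lemma inner_toEuclideanLin_nonneg {M : Matrix (Fin n) (Fin n) ℂ} (hM : M.PosSemidef)
    (x : E) : 0 ≤ Complex.re (inner ℂ x (Matrix.toEuclideanLin M x) : ℂ) := by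
  have h := hM.dotProduct_mulVec_nonneg ((WithLp.equiv 2 (Fin n → ℂ)) x)
  have h' := (Complex.le_def.mp h).1
  rw [EuclideanSpace.inner_eq_star_dotProduct, Matrix.toEuclideanLin_apply,
    WithLp.ofLp_toLp]
  simpa [dotProduct_comm] using h'

/-- The key counting lemma: the number of eigenvalues above `t` is monotone in the
Loewner order. -/
lemma count_mono {A B : Matrix (Fin n) (Fin n) ℂ} (hA : A.IsHermitian)
    (hB : B.IsHermitian) (hAB : (B - A).PosSemidef) (t : ℝ) :
    (Finset.univ.filter fun j => t < hA.eigenvalues j).card ≤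
    (Finset.univ.filter fun j => t < hB.eigenvalues j).card := by
  by_contra hcon
  push_neg at hcon
  set SA := Finset.univ.filter fun j => t < hA.eigenvalues j with hSAdef
  set SB := Finset.univ.filter fun j => ¬ t < hB.eigenvalues j with hSBdef
  have hcard : (Finset.univ.filter fun j => t < hB.eigenvalues j).card + SB.card = n := by
    rw [Finset.card_filter_add_card_filter_not]
    simp
  set V := Submodule.span ℂ (Set.range fun j : {j // j ∈ SA} => hA.eigenvectorBasis j) with hVdef
  set W := Submodule.span ℂ (Set.range fun j : {j // j ∈ SB} => hB.eigenvectorBasis j) with hWdef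
  have hliA : LinearIndependent ℂ (fun j : {j // j ∈ SA} => hA.eigenvectorBasis j) :=
    (hA.eigenvectorBasis.orthonormal.linearIndependent).comp _ Subtype.val_injective
  have hliB : LinearIndependent ℂ (fun j : {j // j ∈ SB} => hB.eigenvectorBasis j) :=
    (hB.eigenvectorBasis.orthonormal.linearIndependent).comp _ Subtype.val_injective
  have hV : Module.finrank ℂ V = SA.card := by
    rw [hVdef, finrank_span_eq_card hliA, Fintype.card_coe]
  have hW : Module.finrank ℂ W = SB.card := by
    rw [hWdef, finrank_span_eq_card hliB, Fintype.card_coe]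
  have hrankE : Module.finrank ℂ E = n := finrank_euclideanSpace_fin
  have hinf : 0 < Module.finrank ℂ ↥(V ⊓ W) := by
    have h1 := Submodule.finrank_sup_add_finrank_inf_eq V W
    have h2 : Module.finrank ℂ ↥(V ⊔ W) ≤ Module.finrank ℂ E := Submodule.finrank_le _
    rw [hrankE] at h2
    omega
  haveI : Nontrivial ↥(V ⊓ W) := Module.finrank_pos_iff.mp hinf
  obtain ⟨⟨x, hxVW⟩, hxne⟩ := exists_ne (0 : ↥(V ⊓ W))
  have hx0 : x ≠ 0 := by
    simpa [Submodule.mk_eq_zero] using hxne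
  have hxV : x ∈ V := hxVW.1
  have hxW : x ∈ W := hxVW.2
  -- the quadratic form of A on x is > t‖x‖², that of B is ≤ t‖x‖²
  have hnx : (0:ℝ) < ‖x‖ ^ 2 := pow_pos (norm_pos_iff.mpr hx0) 2
  have hqA : t * ‖x‖ ^ 2 < Complex.re (inner ℂ x (Matrix.toEuclideanLin A x) : ℂ) := by
    have key : Complex.re (inner ℂ x (Matrix.toEuclideanLin A x) : ℂ) - t * ‖x‖ ^ 2
        = ∑ j, (hA.eigenvalues j - t) * ‖hA.eigenvectorBasis.repr x j‖ ^ 2 := by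
      rw [qform_eq hA x, ← sum_repr_sq hA.eigenvectorBasis x, Finset.mul_sum,
        ← Finset.sum_sub_distrib]
      exact Finset.sum_congr rfl fun j _ => by ring
    have hex : ∃ j ∈ Finset.univ, 0 < (hA.eigenvalues j - t) * ‖hA.eigenvectorBasis.repr x j‖ ^ 2 := by
      have : ∃ j, hA.eigenvectorBasis.repr x j ≠ 0 := by
        by_contra hall
        push_neg at hall
        exact hx0 (by
          have : hA.eigenvectorBasis.repr x = 0 := by
            ext j; exact hall j
          simpa using hA.eigenvectorBasis.repr.map_eq_zero_iff.mp this)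
      obtain ⟨j, hj⟩ := this
      have hjS : j ∈ SA := by
        by_contra hjn
        exact hj (repr_eq_zero_of_mem_span hxV hjn)
      refine ⟨j, Finset.mem_univ j, ?_⟩
      have h1 : 0 < hA.eigenvalues j - t := by
        have := (Finset.mem_filter.mp hjS).2
        linarith
      have h2 : 0 < ‖hA.eigenvectorBasis.repr x j‖ ^ 2 := pow_pos (norm_pos_iff.mpr hj) 2
      exact mul_pos h1 h2
    have hnn : ∀ j ∈ Finset.univ, 0 ≤ (hA.eigenvalues j - t) * ‖hA.eigenvectorBasis.repr x j‖ ^ 2 := by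
      intro j _
      by_cases hjS : j ∈ SA
      · have := (Finset.mem_filter.mp hjS).2
        have h2 : (0:ℝ) ≤ ‖hA.eigenvectorBasis.repr x j‖ ^ 2 := by positivity
        nlinarith
      · rw [repr_eq_zero_of_mem_span hxV hjS]
        simp
    have h0 := Finset.sum_pos' hnn hex
    rw [← key] at h0
    linarith
  have hqB : Complex.re (inner ℂ x (Matrix.toEuclideanLin B x) : ℂ) ≤ t * ‖x‖ ^ 2 := by
    have key : t * ‖x‖ ^ 2 - Complex.re (inner ℂ x (Matrix.toEuclideanLin B x) : ℂ)
        = ∑ j, (t - hB.eigenvalues j) * ‖hB.eigenvectorBasis.repr x j‖ ^ 2 := by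
      rw [qform_eq hB x, ← sum_repr_sq hB.eigenvectorBasis x, Finset.mul_sum,
        ← Finset.sum_sub_distrib]
      exact Finset.sum_congr rfl fun j _ => by ring
    have hnn : ∀ j ∈ Finset.univ, 0 ≤ (t - hB.eigenvalues j) * ‖hB.eigenvectorBasis.repr x j‖ ^ 2 := by
      intro j _
      by_cases hjS : j ∈ SB
      · have := (Finset.mem_filter.mp hjS).2
        push_neg at this
        have h2 : (0:ℝ) ≤ ‖hB.eigenvectorBasis.repr x j‖ ^ 2 := by positivity
        nlinarith
      · rw [repr_eq_zero_of_mem_span hxW hjS]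
        simp
    have h0 := Finset.sum_nonneg hnn
    rw [← key] at h0
    linarith
  -- PSD gives monotonicity of the quadratic form
  have hmono : Complex.re (inner ℂ x (Matrix.toEuclideanLin A x) : ℂ)
      ≤ Complex.re (inner ℂ x (Matrix.toEuclideanLin B x) : ℂ) := by
    have h := inner_toEuclideanLin_nonneg hAB x
    rw [map_sub] at h
    rw [LinearMap.sub_apply, inner_sub_right] at h
    rw [Complex.sub_re] at h
    linarith
  linarith


lemma sorted_le {u v : Fin n → ℝ} (hu : Monotone u) (hv : Monotone v)
    (h : ∀ t, (Finset.univ.filter fun j => t < u j).card ≤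
      (Finset.univ.filter fun j => t < v j).card)
    (k : Fin n) : u k ≤ v k := by
  by_contra hc
  push_neg at hc
  have hsub1 : Finset.Ici k ⊆ (Finset.univ.filter fun j => v k < u j) := by
    intro j hj
    rw [Finset.mem_Ici] at hj
    simp only [Finset.mem_filter, Finset.mem_univ, true_and]
    exact lt_of_lt_of_le hc (hu hj)
  have hsub2 : (Finset.univ.filter fun j => v k < v j) ⊆ Finset.Ioi k := by
    intro j hj
    simp only [Finset.mem_filter, Finset.mem_univ, true_and] at hj
    rw [Finset.mem_Ioi]
    by_contra hle
    push_neg at hle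
    exact absurd (hv hle) (not_le.mpr hj)
  have c1 := Finset.card_le_card hsub1
  have c2 := Finset.card_le_card hsub2
  rw [Fin.card_Ici] at c1
  rw [Fin.card_Ioi] at c2
  have := h (v k)
  have hk := k.isLt
  omega

lemma card_filter_comp (σ : Equiv.Perm (Fin n)) (p : Fin n → Prop) [DecidablePred p] :
    (Finset.univ.filter fun j => p (σ j)).card = (Finset.univ.filter p).card := by
  refine Finset.card_bij (fun j _ => σ j) ?_ ?_ ?_
  · intro a ha
    simp only [Finset.mem_filter, Finset.mem_univ, true_and] at ha ⊢
    exact ha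
  · intro a _ b _ hab
    exact σ.injective hab
  · intro b hb
    simp only [Finset.mem_filter, Finset.mem_univ, true_and] at hb
    exact ⟨σ.symm b, by simp [hb], by simp⟩

lemma lip_sum {A C : Matrix (Fin n) (Fin n) ℂ} (hA : A.IsHermitian) (hC : C.IsHermitian)
    (hAC : (C - A).PosSemidef) {f : ℝ → ℝ} (hf : LipschitzWith 1 f) :
    |∑ j, f (hA.eigenvalues j) - ∑ j, f (hC.eigenvalues j)| ≤
      ∑ j, hC.eigenvalues j - ∑ j, hA.eigenvalues j := by
  set σA := Tuple.sort hA.eigenvalues with hσA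
  set σC := Tuple.sort hC.eigenvalues with hσC
  set u := hA.eigenvalues ∘ σA with hudef
  set v := hC.eigenvalues ∘ σC with hvdef
  have hu : Monotone u := Tuple.monotone_sort hA.eigenvalues
  have hv : Monotone v := Tuple.monotone_sort hC.eigenvalues
  have hpt : ∀ k, u k ≤ v k := by
    refine sorted_le hu hv (fun t => ?_)
    rw [hudef, hvdef]
    show (Finset.univ.filter fun j => t < hA.eigenvalues (σA j)).card ≤
      (Finset.univ.filter fun j => t < hC.eigenvalues (σC j)).card
    rw [card_filter_comp σA (fun x => t < hA.eigenvalues x),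
      card_filter_comp σC (fun x => t < hC.eigenvalues x)]
    exact count_mono hA hC hAC t
  have hfA : ∑ j, f (hA.eigenvalues j) = ∑ j, f (u j) :=
    (Equiv.sum_comp σA fun j => f (hA.eigenvalues j)).symm
  have hfC : ∑ j, f (hC.eigenvalues j) = ∑ j, f (v j) :=
    (Equiv.sum_comp σC fun j => f (hC.eigenvalues j)).symm
  have hsA : ∑ j, hA.eigenvalues j = ∑ j, u j :=
    (Equiv.sum_comp σA fun j => hA.eigenvalues j).symm
  have hsC : ∑ j, hC.eigenvalues j = ∑ j, v j :=
    (Equiv.sum_comp σC fun j => hC.eigenvalues j).symm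
  rw [hfA, hfC, hsA, hsC, ← Finset.sum_sub_distrib, ← Finset.sum_sub_distrib]
  calc |∑ j, (f (u j) - f (v j))| ≤ ∑ j, |f (u j) - f (v j)| :=
        Finset.abs_sum_le_sum_abs _ _
    _ ≤ ∑ j, (v j - u j) := by
        refine Finset.sum_le_sum fun j _ => ?_
        have h1 : |f (u j) - f (v j)| ≤ |u j - v j| := by
          have := hf.dist_le_mul (u j) (v j)
          rw [Real.dist_eq, Real.dist_eq] at this
          simpa using this
        have h2 : |u j - v j| = v j - u j := by
          rw [abs_sub_comm, abs_of_nonneg (by linarith [hpt j])]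
        linarith

lemma trace_eq_sum_eigen {M : Matrix (Fin n) (Fin n) ℂ} (hM : M.IsHermitian) :
    M.trace = ∑ j, (hM.eigenvalues j : ℂ) := by
  conv_lhs => rw [hM.spectral_theorem, Unitary.conjStarAlgAut_apply]
  rw [Matrix.trace_mul_cycle,
    (Matrix.mem_unitaryGroup_iff').mp hM.eigenvectorUnitary.2, one_mul,
    Matrix.trace_diagonal]
  rfl

lemma trace_conj_diag {U : Matrix (Fin n) (Fin n) ℂ} (hU : U ∈ Matrix.unitaryGroup (Fin n) ℂ)
    (d : Fin n → ℝ) :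
    (U * Matrix.diagonal (fun j => (d j : ℂ)) * star U).trace = ∑ j, (d j : ℂ) := by
  rw [Matrix.trace_mul_cycle, (Matrix.mem_unitaryGroup_iff').mp hU, one_mul,
    Matrix.trace_diagonal]

lemma conj_diag_posSemidef (U : Matrix (Fin n) (Fin n) ℂ) {d : Fin n → ℝ} (hd : ∀ j, 0 ≤ d j) :
    (U * Matrix.diagonal (fun j => (d j : ℂ)) * star U).PosSemidef := by
  rw [Matrix.star_eq_conjTranspose]
  exact (Matrix.posSemidef_diagonal_iff.mpr fun i =>
    Complex.zero_le_real.mpr (hd i)).mul_mul_conjTranspose_same U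

end Stmt4Aux


open Stmt4Aux in
/-- For Hermitian matrices `A`, `A'` and a 1-Lipschitz `f : ℝ → ℝ`,
`|tr f(A) - tr f(A')| ≤ ‖A' - A‖₁`, where the trace norm of the Hermitian matrix
`A' - A` is the sum of the absolute values of its eigenvalues. -/
theorem stmt4 (n : ℕ) (A A' : Matrix (Fin n) (Fin n) ℂ)
    (hA : A.IsHermitian) (hA' : A'.IsHermitian) (hD : (A' - A).IsHermitian)
    (f : ℝ → ℝ) (hf : LipschitzWith 1 f) :
    |∑ j, f (hA.eigenvalues j) - ∑ j, f (hA'.eigenvalues j)| ≤ ∑ j, |hD.eigenvalues j| := by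
  classical
  set d := hD.eigenvalues with hd
  set U : Matrix (Fin n) (Fin n) ℂ := (hD.eigenvectorUnitary : Matrix (Fin n) (Fin n) ℂ) with hU
  have hUmem : U ∈ Matrix.unitaryGroup (Fin n) ℂ := hD.eigenvectorUnitary.2
  set Dp : Matrix (Fin n) (Fin n) ℂ :=
    U * Matrix.diagonal (fun j => ((max (d j) 0 : ℝ) : ℂ)) * star U with hDp
  have hDpPSD : Dp.PosSemidef := conj_diag_posSemidef U (fun j => le_max_right _ _)
  have hDspec : A' - A = U * Matrix.diagonal (fun j => ((d j : ℝ) : ℂ)) * star U :=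
    by conv_lhs => rw [hD.spectral_theorem, Unitary.conjStarAlgAut_apply]
       rfl
  have hDiff : Dp - (A' - A)
      = U * Matrix.diagonal (fun j => ((max (d j) 0 - d j : ℝ) : ℂ)) * star U := by
    rw [hDp, hDspec, ← Matrix.sub_mul, ← Matrix.mul_sub, Matrix.diagonal_sub]
    congr 2
    funext j
    push_cast
    ring
  have hDnPSD : (Dp - (A' - A)).PosSemidef := by
    rw [hDiff]
    exact conj_diag_posSemidef U (fun j => sub_nonneg.mpr (le_max_left _ _))
  set C := A + Dp with hC0
  have hCH : C.IsHermitian := hA.add hDpPSD.1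
  have h1 : (C - A).PosSemidef := by
    have h : C - A = Dp := by rw [hC0]; abel
    rwa [h]
  have h2 : (C - A').PosSemidef := by
    have h : C - A' = Dp - (A' - A) := by rw [hC0]; abel
    rwa [h]
  have e1 := lip_sum hA hCH h1 hf
  have e2 := lip_sum hA' hCH h2 hf
  have trDp : Dp.trace = ∑ j, ((max (d j) 0 : ℝ) : ℂ) := trace_conj_diag hUmem _
  have trDn : (Dp - (A' - A)).trace = ∑ j, ((max (d j) 0 - d j : ℝ) : ℂ) := by
    rw [hDiff]; exact trace_conj_diag hUmem _
  have s1 : ∑ j, hCH.eigenvalues j - ∑ j, hA.eigenvalues j = ∑ j, max (d j) 0 := by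
    have hc : ((∑ j, hCH.eigenvalues j - ∑ j, hA.eigenvalues j : ℝ) : ℂ)
        = ((∑ j, max (d j) 0 : ℝ) : ℂ) := by
      push_cast
      rw [← trace_eq_sum_eigen hCH, ← trace_eq_sum_eigen hA, ← Matrix.trace_sub]
      have h : C - A = Dp := by rw [hC0]; abel
      rw [h, trDp]
    exact_mod_cast hc
  have s2 : ∑ j, hCH.eigenvalues j - ∑ j, hA'.eigenvalues j
      = ∑ j, (max (d j) 0 - d j) := by
    have hc : ((∑ j, hCH.eigenvalues j - ∑ j, hA'.eigenvalues j : ℝ) : ℂ)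
        = ((∑ j, (max (d j) 0 - d j) : ℝ) : ℂ) := by
      push_cast
      rw [← trace_eq_sum_eigen hCH, ← trace_eq_sum_eigen hA', ← Matrix.trace_sub]
      have h : C - A' = Dp - (A' - A) := by rw [hC0]; abel
      rw [h, trDn]
      push_cast
      rfl
    exact_mod_cast hc
  have habs : ∑ j, max (d j) 0 + ∑ j, (max (d j) 0 - d j) = ∑ j, |d j| := by
    rw [← Finset.sum_add_distrib]
    refine Finset.sum_congr rfl fun j _ => ?_
    rcases le_total 0 (d j) with h | h
    · rw [max_eq_left h, abs_of_nonneg h]; ring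
    · rw [max_eq_right h, abs_of_nonpos h]; ring
  calc |∑ j, f (hA.eigenvalues j) - ∑ j, f (hA'.eigenvalues j)|
      ≤ |∑ j, f (hA.eigenvalues j) - ∑ j, f (hCH.eigenvalues j)| +
        |∑ j, f (hCH.eigenvalues j) - ∑ j, f (hA'.eigenvalues j)| := abs_sub_le _ _ _
    _ ≤ (∑ j, hCH.eigenvalues j - ∑ j, hA.eigenvalues j) +
        (∑ j, hCH.eigenvalues j - ∑ j, hA'.eigenvalues j) := by
        have e2' : |∑ j, f (hCH.eigenvalues j) - ∑ j, f (hA'.eigenvalues j)|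
            ≤ ∑ j, hCH.eigenvalues j - ∑ j, hA'.eigenvalues j := by
          rw [abs_sub_comm]; exact e2
        exact add_le_add e1 e2'
    _ = ∑ j, |d j| := by rw [s1, s2, habs]
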